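/- For a monotone submodular g with g(∅)=0 and an optimal set S* with |S*| ≤ b, at any step of greedy with current set S_t, there exists p ∈ S* \ S_t (or g(S_t) ≥ g(S*)) with marginal gain Δ_g(p | S_t) ≥ (g(S*) − g(S_t)) / b. -/

import Mathlib

open Finset

/-- Key lemma of the Nemhauser–Wolsey analysis: either greedy's current set already
matches the optimum, or some element of S* \ S_t has marginal gain at least
(g(S*) − g(S_t))/b. -/
theorem greedy_key_lemma {κ : Type*} [DecidableEq κ]
    (P : Finset κ) (b : ℕ) (hb : 0 < b)
    (g : Finset κ → ℝ)
    (hg0 : g ∅ = 0)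
    (hnonneg : ∀ S : Finset κ, S ⊆ P → 0 ≤ g S)
    (hmono : ∀ S T : Finset κ, S ⊆ T → T ⊆ P → g S ≤ g T)
    (hsub : ∀ S T : Finset κ, S ⊆ T → T ⊆ P → ∀ p ∈ P, p ∉ T →
      g (insert p S) - g S ≥ g (insert p T) - g T)
    (Sstar St : Finset κ) (hstarP : Sstar ⊆ P) (hcard : Sstar.card ≤ b)
    (hStP : St ⊆ P) :
    g Sstar ≤ g St ∨
      ∃ p ∈ Sstar \ St,
        (g Sstar - g St) / (b : ℝ) ≤ g (insert p St) - g St := by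
  -- telescoping bound
  have key : ∀ D : Finset κ, D ⊆ P →
      g (St ∪ D) - g St ≤ ∑ p ∈ D \ St, (g (insert p St) - g St) := by
    intro D
    induction D using Finset.induction_on with
    | empty => intro _; simp
    | insert _ _ ha =>
      rename_i a D ih
      intro hDP
      have haP : a ∈ P := hDP (mem_insert_self a D)
      have hDP' : D ⊆ P := (subset_insert a D).trans hDP
      by_cases haSt : a ∈ St
      · have h1 : St ∪ insert a D = St ∪ D := by
          ext x; simp only [mem_union, mem_insert]
          constructor
          · rintro (h | rfl | h)
            · exact Or.inl h
            · exact Or.inl haSt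
            · exact Or.inr h
          · rintro (h | h)
            · exact Or.inl h
            · exact Or.inr (Or.inr h)
        have h2 : insert a D \ St = D \ St := by
          ext x; simp only [mem_sdiff, mem_insert]
          constructor
          · rintro ⟨h | h, hx⟩
            · exact absurd haSt (h ▸ hx)
            · exact ⟨h, hx⟩
          · rintro ⟨h, hx⟩; exact ⟨Or.inr h, hx⟩
        rw [h1, h2]; exact ih hDP'
      · by_cases haD : a ∈ St ∪ D
        · simp [haSt, ha] at haD
        · have h1 : St ∪ insert a D = insert a (St ∪ D) := Finset.union_insert a St D
          have h2 : insert a D \ St = insert a (D \ St) := by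
            ext x
            simp only [mem_sdiff, mem_insert]
            constructor
            · rintro ⟨rfl | h, hx⟩
              · exact Or.inl rfl
              · exact Or.inr ⟨h, hx⟩
            · rintro (rfl | ⟨h, hx⟩)
              · exact ⟨Or.inl rfl, haSt⟩
              · exact ⟨Or.inr h, hx⟩
          have haD' : a ∉ D \ St := fun h => ha (mem_sdiff.mp h).1
          rw [h1, h2, Finset.sum_insert haD']
          have hsub' := hsub St (St ∪ D) subset_union_left
            (union_subset hStP hDP') a haP haD
          have := ih hDP'
          linarith
  have hkey := key Sstar hstarP
  by_cases hempty : Sstar \ St = ∅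
  · left
    have : Sstar ⊆ St := by
      intro x hx
      by_contra hxSt
      exact absurd (mem_sdiff.mpr ⟨hx, hxSt⟩) (by simp [hempty])
    exact hmono Sstar St this hStP
  · right
    obtain ⟨p, hp, hpmax⟩ := Finset.exists_max_image (Sstar \ St)
      (fun q => g (insert q St) - g St) (nonempty_of_ne_empty hempty)
    refine ⟨p, hp, ?_⟩
    have hpP : p ∈ P := hstarP (mem_sdiff.mp hp).1
    have hΔ0 : 0 ≤ g (insert p St) - g St := by
      have := hmono St (insert p St) (subset_insert p St)
        (insert_subset hpP hStP)
      linarith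
    have hsum : ∑ q ∈ Sstar \ St, (g (insert q St) - g St)
        ≤ (Sstar \ St).card * (g (insert p St) - g St) := by
      calc ∑ q ∈ Sstar \ St, (g (insert q St) - g St)
          ≤ ∑ _q ∈ Sstar \ St, (g (insert p St) - g St) :=
            Finset.sum_le_sum (fun q hq => hpmax q hq)
        _ = (Sstar \ St).card * (g (insert p St) - g St) := by
            rw [Finset.sum_const, nsmul_eq_mul]
    have hcard' : ((Sstar \ St).card : ℝ) ≤ (b : ℝ) := by
      exact_mod_cast le_trans (Finset.card_le_card (sdiff_subset)) hcard
    have hmono' : g Sstar ≤ g (St ∪ Sstar) :=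
      hmono Sstar (St ∪ Sstar) subset_union_right (union_subset hStP hstarP)
    have hb' : (0:ℝ) < b := by exact_mod_cast hb
    rw [div_le_iff₀ hb']
    have : ((Sstar \ St).card : ℝ) * (g (insert p St) - g St)
        ≤ (b : ℝ) * (g (insert p St) - g St) :=
      mul_le_mul_of_nonneg_right hcard' hΔ0
    have hfin : g Sstar - g St ≤ (b : ℝ) * (g (insert p St) - g St) := by
      linarith
    linarith [hfin, mul_comm (b:ℝ) (g (insert p St) - g St)]
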